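/- Let N ≥ 2 and let θ : {1,…,N} → [−π,π) be a configuration on the open path with wrapped increments δ(i) := wrap_π(θ(i+1) − θ(i)) for i = 1,…,N−1. Let θ' be obtained from θ by a midpoint update at any edge (k,k+1) with 1 ≤ k ≤ N−1, and let δ'(i) be the wrapped increments of θ'. Then ∑_{i=1}^{N−1} |δ'(i)| ≤ ∑_{i=1}^{N−1} |δ(i)|; i.e., the total absolute increment on the path is nonincreasing under midpoint updates. -/
import Mathlib


open Real

/-- The wrap operator `wrap_π(a) = a - 2π⌊(a+π)/(2π)⌋`, taking values in `[-π, π)`. -/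
noncomputable def wrapPi (a : ℝ) : ℝ := a - 2 * π * ⌊(a + π) / (2 * π)⌋


lemma wrapPi_mem (a : ℝ) : wrapPi a ∈ Set.Ico (-π) π := by
  have hπ := Real.pi_pos
  have h2π : (0:ℝ) < 2 * π := by linarith
  have h1 := Int.floor_le ((a + π) / (2 * π))
  have h2 := Int.lt_floor_add_one ((a + π) / (2 * π))
  have ht : (a + π) / (2 * π) * (2 * π) = a + π := div_mul_cancel₀ _ (ne_of_gt h2π)
  constructor
  · unfold wrapPi
    nlinarith [mul_le_mul_of_nonneg_right h1 (le_of_lt h2π)]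
  · unfold wrapPi
    nlinarith [mul_le_mul_of_nonneg_right (le_of_lt h2) (le_of_lt h2π)]

lemma wrapPi_add_int_mul (a : ℝ) (m : ℤ) : wrapPi (a + 2 * π * m) = wrapPi a := by
  have hπ := Real.pi_pos
  have h2π : (2 * π) ≠ 0 := by positivity
  unfold wrapPi
  have h : (a + 2 * π * m + π) / (2 * π) = (a + π) / (2 * π) + m := by
    field_simp; ring
  rw [h, Int.floor_add_intCast]
  push_cast
  ring

lemma wrapPi_wrapPi_add (a b : ℝ) : wrapPi (wrapPi a + b) = wrapPi (a + b) := by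
  have h : wrapPi a + b = (a + b) + 2 * π * (-⌊(a + π) / (2 * π)⌋ : ℤ) := by
    unfold wrapPi; push_cast; ring
  rw [h, wrapPi_add_int_mul]

lemma wrapPi_wrapPi_sub (a b : ℝ) : wrapPi (wrapPi a - b) = wrapPi (a - b) := by
  rw [sub_eq_add_neg, wrapPi_wrapPi_add, ← sub_eq_add_neg]

lemma wrapPi_sub_wrapPi (a b : ℝ) : wrapPi (b - wrapPi a) = wrapPi (b - a) := by
  have h : b - wrapPi a = (b - a) + 2 * π * (⌊(a + π) / (2 * π)⌋ : ℤ) := by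
    unfold wrapPi; push_cast; ring
  rw [h, wrapPi_add_int_mul]

lemma wrapPi_zero : wrapPi 0 = 0 := by
  have hπ := Real.pi_pos
  unfold wrapPi
  have h : (0 + π) / (2 * π) = 1 / 2 := by field_simp; ring
  rw [h]
  norm_num

lemma wrapPi_eq_self {a : ℝ} (h1 : -π ≤ a) (h2 : a < π) : wrapPi a = a := by
  have hπ := Real.pi_pos
  have h2π : (0:ℝ) < 2 * π := by linarith
  unfold wrapPi
  have hf : ⌊(a + π) / (2 * π)⌋ = 0 := by
    rw [Int.floor_eq_zero_iff]
    constructor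
    · exact div_nonneg (by linarith) (le_of_lt h2π)
    · rw [div_lt_one h2π]; linarith
  rw [hf]; push_cast; ring

lemma abs_wrapPi_le (a : ℝ) : |wrapPi a| ≤ |a| := by
  have hπ := Real.pi_pos
  obtain ⟨hm1, hm2⟩ := wrapPi_mem a
  by_cases h : -π ≤ a ∧ a < π
  · rw [wrapPi_eq_self h.1 h.2]
  · have hge : π ≤ |a| := by
      push_neg at h
      rcases le_or_gt (-π) a with h1 | h1
      · have := h h1
        rw [abs_of_nonneg (by linarith)]; exact this
      · rw [abs_of_neg (by linarith)]; linarith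
    have : |wrapPi a| ≤ π := abs_le.mpr ⟨hm1, le_of_lt hm2⟩
    linarith

lemma abs_wrapPi_add_le (x y : ℝ) : |wrapPi (x + y)| ≤ |wrapPi x| + |y| := by
  rw [← wrapPi_wrapPi_add]
  calc |wrapPi (wrapPi x + y)| ≤ |wrapPi x + y| := abs_wrapPi_le _
    _ ≤ |wrapPi x| + |y| := abs_add_le _ _

/-- On the open path, a midpoint update at any edge `(k,k+1)` does not
increase the total absolute wrapped increment `∑_{i=1}^{N-1} |δ(i)|`. -/
theorem path_total_increment_nonincreasing
    (N : ℕ) (hN : 2 ≤ N)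
    (θ : ℕ → ℝ) (hθ : ∀ i : ℕ, 1 ≤ i → i ≤ N → θ i ∈ Set.Ico (-π) π)
    (k : ℕ) (hk1 : 1 ≤ k) (hkN : k ≤ N - 1)
    (θ' : ℕ → ℝ)
    (hθ' : θ' = fun i =>
      if i = k then wrapPi (θ k + wrapPi (θ (k + 1) - θ k) / 2)
      else if i = k + 1 then wrapPi (θ (k + 1) - wrapPi (θ (k + 1) - θ k) / 2)
      else θ i) :
    ∑ i ∈ Finset.Icc 1 (N - 1), |wrapPi (θ' (i + 1) - θ' i)|
      ≤ ∑ i ∈ Finset.Icc 1 (N - 1), |wrapPi (θ (i + 1) - θ i)| := by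
  set δ := wrapPi (θ (k + 1) - θ k) with hδdef
  have hk' : θ' k = wrapPi (θ k + δ / 2) := by rw [hθ']; simp
  have hk1' : θ' (k + 1) = wrapPi (θ (k + 1) - δ / 2) := by
    rw [hθ']; simp
  have hoth : ∀ i, i ≠ k → i ≠ k + 1 → θ' i = θ i := by
    intro i h1 h2; rw [hθ']; simp [h1, h2]
  set s : Finset ℕ := Finset.Icc 1 (N - 1) with hs
  set Tri : Finset ℕ := {k - 1, k, k + 1} with hTri
  set g : ℕ → ℝ := fun i => |wrapPi (θ' (i + 1) - θ' i)| with hg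
  set f : ℕ → ℝ := fun i => |wrapPi (θ (i + 1) - θ i)| with hf
  have hfk : f k = |δ| := by rw [hf]
  -- edge k becomes zero
  have hgk : g k = 0 := by
    rw [hg]
    simp only
    rw [hk', hk1', wrapPi_sub_wrapPi, wrapPi_wrapPi_sub]
    have h : θ (k + 1) - δ / 2 - (θ k + δ / 2) = (θ (k + 1) - θ k) - δ := by ring
    rw [h, hδdef, wrapPi_sub_wrapPi, sub_self, wrapPi_zero, abs_zero]
  -- edge k-1 bound
  have hgkm : g (k - 1) ≤ f (k - 1) + |δ| / 2 := by
    have hkk : k - 1 + 1 = k := by omega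
    rw [hg, hf]
    simp only [hkk]
    rw [hoth (k - 1) (by omega) (by omega), hk', wrapPi_wrapPi_sub]
    have h : θ k + δ / 2 - θ (k - 1) = (θ k - θ (k - 1)) + δ / 2 := by ring
    rw [h]
    calc |wrapPi ((θ k - θ (k - 1)) + δ / 2)|
        ≤ |wrapPi (θ k - θ (k - 1))| + |δ / 2| := abs_wrapPi_add_le _ _
      _ = |wrapPi (θ k - θ (k - 1))| + |δ| / 2 := by rw [abs_div]; norm_num
  -- edge k+1 bound
  have hgkp : g (k + 1) ≤ f (k + 1) + |δ| / 2 := by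
    rw [hg, hf]
    simp only
    rw [hoth (k + 1 + 1) (by omega) (by omega), hk1', wrapPi_sub_wrapPi]
    have h : θ (k + 1 + 1) - (θ (k + 1) - δ / 2) = (θ (k + 1 + 1) - θ (k + 1)) + δ / 2 := by
      ring
    rw [h]
    calc |wrapPi ((θ (k + 1 + 1) - θ (k + 1)) + δ / 2)|
        ≤ |wrapPi (θ (k + 1 + 1) - θ (k + 1))| + |δ / 2| := abs_wrapPi_add_le _ _
      _ = |wrapPi (θ (k + 1 + 1) - θ (k + 1))| + |δ| / 2 := by rw [abs_div]; norm_num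
  -- untouched edges
  have hsame : ∀ i ∈ s, i ∉ Tri → g i = f i := by
    intro i _ hiT
    simp only [hTri, Finset.mem_insert, Finset.mem_singleton, not_or] at hiT
    obtain ⟨h1, h2, h3⟩ := hiT
    rw [hg, hf]
    simp only
    rw [hoth i h2 h3, hoth (i + 1) (by omega) (by omega)]
  -- sum manipulation
  set B : ℕ → ℝ := fun i => if i = k then -f k else |δ| / 2 with hB
  have hks : k ∈ s ∩ Tri := by
    refine Finset.mem_inter.mpr ⟨Finset.mem_Icc.mpr ⟨hk1, hkN⟩, ?_⟩
    simp [hTri]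
  have e1 : ∑ i ∈ s, (g i - f i) = ∑ i ∈ s ∩ Tri, (g i - f i) := by
    refine (Finset.sum_subset (Finset.inter_subset_left) ?_).symm
    intro i his hiT
    have : i ∉ Tri := fun h => hiT (Finset.mem_inter.mpr ⟨his, h⟩)
    rw [hsame i his this, sub_self]
  have e2 : ∑ i ∈ s ∩ Tri, (g i - f i) ≤ ∑ i ∈ s ∩ Tri, B i := by
    refine Finset.sum_le_sum ?_
    intro i hi
    simp only [hB]
    by_cases hik : i = k
    · subst hik
      rw [if_pos rfl, hgk]; linarith
    · rw [if_neg hik]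
      have hiT := (Finset.mem_inter.mp hi).2
      simp only [hTri, Finset.mem_insert, Finset.mem_singleton] at hiT
      rcases hiT with h | h | h
      · subst h; linarith [hgkm]
      · exact absurd h hik
      · subst h; linarith [hgkp]
  have e3 : ∑ i ∈ s ∩ Tri, B i ≤ ∑ i ∈ Tri, B i := by
    refine Finset.sum_le_sum_of_subset_of_nonneg (Finset.inter_subset_right) ?_
    intro i hiT hiN
    have hik : i ≠ k := fun h => hiN (h ▸ hks)
    simp only [hB]
    rw [if_neg hik]
    positivity
  have e4 : ∑ i ∈ Tri, B i = 0 := by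
    have h1 : (k : ℕ) - 1 ∉ ({k, k + 1} : Finset ℕ) := by
      simp only [Finset.mem_insert, Finset.mem_singleton]; omega
    have h2 : k ∉ ({k + 1} : Finset ℕ) := by simp
    rw [hTri, Finset.sum_insert h1, Finset.sum_insert h2, Finset.sum_singleton]
    simp only [hB, if_neg (show k - 1 ≠ k by omega), if_neg (show k + 1 ≠ k by omega),
      ite_true, eq_self_iff_true, hfk]
    ring
  have key : ∑ i ∈ s, (g i - f i) ≤ 0 := by
    rw [e1]; linarith
  rw [Finset.sum_sub_distrib] at key
  linarith
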